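/- Let s ∈ [0,1)^n and define γ ∈ ℝ^n by γ_j = (1 − (1 − s_j)^{α_j})/s_j if s_j > 0 and γ_j = α_j if s_j = 0. Then for every x ∈ [0,1]^n with x_j ≤ 1 − s_j for all j, one has ∏_{j=1}^n x_j^{α_j} ≥ 1 + Σ_{j=1}^n γ_j (x_j − 1). In particular (taking s = 0), ∏_{j=1}^n x_j^{α_j} ≥ 1 + Σ_{j=1}^n α_j (x_j − 1) for all x ∈ [0,1]^n. -/

import Mathlib

/-- Superadditivity: for `y j ∈ [0,1]`, `1 + Σ (y j - 1) ≤ ∏ y j`. -/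
lemma aux_prod {n : ℕ} (y : Fin n → ℝ) (h0 : ∀ j, 0 ≤ y j) (h1 : ∀ j, y j ≤ 1)
    (t : Finset (Fin n)) : 1 + ∑ j ∈ t, (y j - 1) ≤ ∏ j ∈ t, y j := by
  induction t using Finset.cons_induction with
  | empty => simp
  | cons a t ha ih =>
    rw [Finset.sum_cons, Finset.prod_cons]
    have hsum : ∑ j ∈ t, (y j - 1) ≤ 0 := by
      apply Finset.sum_nonpos; intro j _; linarith [h1 j]
    have h2 : y a * (1 + ∑ j ∈ t, (y j - 1)) ≤ y a * ∏ j ∈ t, y j :=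
      mul_le_mul_of_nonneg_left ih (h0 a)
    nlinarith [h0 a, h1 a]

/-- 1D bound: for `0 ≤ x ≤ c ≤ 1`, `1 - x^α ≤ (Σ_{i<α} c^i) (1 - x)`. -/
lemma aux_one_dim (α : ℕ) (x c : ℝ) (hx0 : 0 ≤ x) (hxc : x ≤ c) (hc1 : c ≤ 1) :
    1 - x ^ α ≤ (∑ i ∈ Finset.range α, c ^ i) * (1 - x) := by
  have key : (∑ i ∈ Finset.range α, x ^ i) * (1 - x) = 1 - x ^ α := by
    have := geom_sum_mul x α
    nlinarith [this]
  rw [← key]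
  apply mul_le_mul_of_nonneg_right _ (by linarith)
  apply Finset.sum_le_sum
  intro i _
  exact pow_le_pow_left₀ hx0 hxc i

theorem stmt14 (n : ℕ) (hn : 1 ≤ n) (α : Fin n → ℕ) (hα : ∀ j, 1 ≤ α j)
    (s : Fin n → ℝ) (hs : ∀ j, 0 ≤ s j ∧ s j < 1)
    (γ : Fin n → ℝ)
    (hγpos : ∀ j, 0 < s j → γ j = (1 - (1 - s j) ^ α j) / s j)
    (hγzero : ∀ j, s j = 0 → γ j = (α j : ℝ)) :
    (∀ x : Fin n → ℝ, (∀ j, 0 ≤ x j) → (∀ j, x j ≤ 1 - s j) →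
      1 + ∑ j, γ j * (x j - 1) ≤ ∏ j, x j ^ α j) ∧
    ∀ x ∈ Set.Icc (0 : Fin n → ℝ) 1,
      1 + ∑ j, (α j : ℝ) * (x j - 1) ≤ ∏ j, x j ^ α j := by
  have hγ : ∀ j, γ j = ∑ i ∈ Finset.range (α j), (1 - s j) ^ i := by
    intro j
    rcases lt_or_eq_of_le (hs j).1 with h | h
    · rw [hγpos j h]
      have hsne : s j ≠ 0 := ne_of_gt h
      field_simp
      have := geom_sum_mul (1 - s j) (α j)
      nlinarith [this]
    · rw [hγzero j h.symm, ← h]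
      simp
  constructor
  · intro x hx0 hx1
    have key : ∀ j, γ j * (x j - 1) ≤ x j ^ α j - 1 := by
      intro j
      have h1 : 1 - s j ≤ 1 := by linarith [(hs j).1]
      have := aux_one_dim (α j) (x j) (1 - s j) (hx0 j) (hx1 j) h1
      rw [hγ j]
      nlinarith [this]
    calc 1 + ∑ j, γ j * (x j - 1) ≤ 1 + ∑ j, (x j ^ α j - 1) := by
          exact add_le_add (le_refl 1) (Finset.sum_le_sum fun j _ => key j)
      _ ≤ ∏ j, x j ^ α j := by
          apply aux_prod
          · intro j; exact pow_nonneg (hx0 j) _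
          · intro j
            exact pow_le_one₀ (hx0 j) (by linarith [hx1 j, (hs j).1])
  · intro x hx
    obtain ⟨hx0, hx1⟩ := hx
    have hx0' : ∀ j, 0 ≤ x j := fun j => hx0 j
    have hx1' : ∀ j, x j ≤ 1 := fun j => hx1 j
    have key : ∀ j, (α j : ℝ) * (x j - 1) ≤ x j ^ α j - 1 := by
      intro j
      have := aux_one_dim (α j) (x j) 1 (hx0' j) (hx1' j) le_rfl
      simp only [one_pow, Finset.sum_const, Finset.card_range, nsmul_eq_mul, mul_one] at this
      nlinarith [this]
    calc 1 + ∑ j, (α j : ℝ) * (x j - 1) ≤ 1 + ∑ j, (x j ^ α j - 1) := by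
          exact add_le_add (le_refl 1) (Finset.sum_le_sum fun j _ => key j)
      _ ≤ ∏ j, x j ^ α j := by
          apply aux_prod
          · intro j; exact pow_nonneg (hx0' j) _
          · intro j; exact pow_le_one₀ (hx0' j) (hx1' j)
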